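/- Let θ₁ and θ₂ be fully invariant congruences on F such that for i = 1,2 there exists n_i ∈ ℕ with the identities x^{n_i} ≈ x^{n_i+1} and x^{n_i} y ≈ y x^{n_i} in θ_i (so each corresponds to a variety of aperiodic monoids with central idempotents). If (xy, yx) ∈ θ₁ ⊔ θ₂, where ⊔ is the join in the lattice of fully invariant congruences (corresponding to the meet of the two varieties), then (xy, yx) ∈ θ₁ or (xy, yx) ∈ θ₂. -/

import Mathlib

/-! ## Words over a countably infinite alphabet -/

/-- `Word` is the free monoid `F` over the countably infinite alphabet `X = ℕ`. -/
abbrev Word : Type := FreeMonoid ℕ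

/-- The letter with index `i`, as a one-letter word. -/
def ltr (i : ℕ) : Word := FreeMonoid.of i

/-- The distinguished letters `x`, `y`, `z`, `t`, `s`. -/
def wx : Word := ltr 0
def wy : Word := ltr 1
def wz : Word := ltr 2
def wt : Word := ltr 3
def ws : Word := ltr 4

/-- The letters `z_i` for `i ≥ 1` (distinct from `x,y,z,t,s` and from all `t_j`). -/
def wzi (i : ℕ) : Word := ltr (2 * i + 10)

/-- The letters `t_i` for `i ≥ 1`. -/
def wti (i : ℕ) : Word := ltr (2 * i + 11)

/-- `pr a len f = f (a+1) * f (a+2) * ⋯ * f (a+len)`, i.e. `∏_{i=a+1}^{a+len} f i`. -/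
def pr (a len : ℕ) (f : ℕ → Word) : Word :=
  ((List.range len).map (fun i => f (a + 1 + i))).prod

/-- The word `u` read from right to left. -/
def revW (u : Word) : Word := FreeMonoid.ofList (FreeMonoid.toList u).reverse

/-- `ρ : ℕ → ℕ` is (restricts to) a permutation of `{1,…,N}`. -/
def IsPermOn (ρ : ℕ → ℕ) (N : ℕ) : Prop :=
  Set.BijOn ρ (Set.Icc 1 N) (Set.Icc 1 N)

/-- `ρ` is a `(p,q)`-permutation: a permutation of `{1,…,p+q}` such that for each
`i = 1,…,p+q-1` exactly one of `ρ i`, `ρ (i+1)` lies in `{1,…,p}`. -/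
def IsPQPerm (ρ : ℕ → ℕ) (p q : ℕ) : Prop :=
  IsPermOn ρ (p + q) ∧
    ∀ i : ℕ, 1 ≤ i → i < p + q → (ρ i ∈ Set.Icc 1 p ↔ ¬ ρ (i + 1) ∈ Set.Icc 1 p)

/-- `(n,m) ∈ N̂₀²`, i.e. `|n - m| ≤ 1`. -/
def InHatN (n m : ℕ) : Prop := n ≤ m + 1 ∧ m ≤ n + 1

/-! ## The words `a_{n,m}[ρ]`, `c_{n,m,k}[τ]`, `d_{n,m,k}[τ]` and friends -/

/-- `a_{n,m}[ρ] = (∏_{i=1}^n z_i t_i) x (∏_{i=1}^{n+m} z_{iρ}) x (∏_{i=n+1}^{n+m} t_i z_i)`. -/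
def wordA (n m : ℕ) (ρ : ℕ → ℕ) : Word :=
  pr 0 n (fun i => wzi i * wti i) * wx * pr 0 (n + m) (fun i => wzi (ρ i)) * wx *
    pr n m (fun i => wti i * wzi i)

/-- `a'_{n,m}[ρ] = (∏_{i=1}^n z_i t_i) x² (∏_{i=1}^{n+m} z_{iρ}) (∏_{i=n+1}^{n+m} t_i z_i)`. -/
def wordA' (n m : ℕ) (ρ : ℕ → ℕ) : Word :=
  pr 0 n (fun i => wzi i * wti i) * (wx * wx) * pr 0 (n + m) (fun i => wzi (ρ i)) *
    pr n m (fun i => wti i * wzi i)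

/-- `â_{n,m}[ρ]`: the word `a_{n,m}[ρ]` with both occurrences of `x` deleted. -/
def hatA (n m : ℕ) (ρ : ℕ → ℕ) : Word :=
  pr 0 n (fun i => wzi i * wti i) * pr 0 (n + m) (fun i => wzi (ρ i)) *
    pr n m (fun i => wti i * wzi i)

/-- `c_{n,m,k}[τ]`. -/
def wordC (n m k : ℕ) (τ : ℕ → ℕ) : Word :=
  pr 0 n (fun i => wzi i * wti i) * (wx * wy * wt) * pr n m (fun i => wzi i * wti i) * wx *
    pr 0 (n + m + k) (fun i => wzi (τ i)) * wy * pr (n + m) k (fun i => wti i * wzi i)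

/-- `c'_{n,m,k}[τ]` (the factor `xyt` of `c_{n,m,k}[τ]` replaced by `yxt`). -/
def wordC' (n m k : ℕ) (τ : ℕ → ℕ) : Word :=
  pr 0 n (fun i => wzi i * wti i) * (wy * wx * wt) * pr n m (fun i => wzi i * wti i) * wx *
    pr 0 (n + m + k) (fun i => wzi (τ i)) * wy * pr (n + m) k (fun i => wti i * wzi i)

/-- `d_{n,m,k}[τ]`: the word `c_{n,m,k}[τ]` read from right to left. -/
def wordD (n m k : ℕ) (τ : ℕ → ℕ) : Word := revW (wordC n m k τ)

/-- `d'_{n,m,k}[τ]`: the word `c'_{n,m,k}[τ]` read from right to left. -/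
def wordD' (n m k : ℕ) (τ : ℕ → ℕ) : Word := revW (wordC' n m k τ)

/-! ## Fully invariant congruences -/

/-- `θ` is a fully invariant congruence on the free monoid `F`. -/
structure IsFIC (θ : Word → Word → Prop) : Prop where
  refl : ∀ u, θ u u
  symm : ∀ {u v}, θ u v → θ v u
  trans : ∀ {u v w}, θ u v → θ v w → θ u w
  mul : ∀ {u₁ v₁ u₂ v₂}, θ u₁ v₁ → θ u₂ v₂ → θ (u₁ * u₂) (v₁ * v₂)
  subst : ∀ (σ : Word →* Word) {u v}, θ u v → θ (σ u) (σ v)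

/-- Containment of binary relations (sets of identities). -/
def RelLe (S θ : Word → Word → Prop) : Prop := ∀ u v, S u v → θ u v

/-- `⟨S⟩`: the least fully invariant congruence containing the set `S` of identities. -/
def ficGen (S : Word → Word → Prop) : Word → Word → Prop :=
  fun u v => ∀ θ : Word → Word → Prop, IsFIC θ → RelLe S θ → θ u v

/-- Intersection of two relations: the meet in the lattice of fully invariant congruences. -/
def RelMeet (θ₁ θ₂ : Word → Word → Prop) : Word → Word → Prop := fun u v => θ₁ u v ∧ θ₂ u v

/-- The join of two fully invariant congruences. -/
def ficJoin (θ₁ θ₂ : Word → Word → Prop) : Word → Word → Prop :=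
  ficGen (fun u v => θ₁ u v ∨ θ₂ u v)

/-- The lattice of all fully invariant congruences on `F` containing `θ` is distributive
(meets in this lattice are intersections, joins are generated joins). -/
def FICLatDistrib (θ : Word → Word → Prop) : Prop :=
  ∀ a b c : Word → Word → Prop, IsFIC a → IsFIC b → IsFIC c →
    RelLe θ a → RelLe θ b → RelLe θ c →
      ∀ u v, RelMeet a (ficJoin b c) u v ↔ ficJoin (RelMeet a b) (RelMeet a c) u v

/-- The lattice of all fully invariant congruences on `F` containing `θ` is modular. -/
def FICLatModular (θ : Word → Word → Prop) : Prop :=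
  ∀ a b c : Word → Word → Prop, IsFIC a → IsFIC b → IsFIC c →
    RelLe θ a → RelLe θ b → RelLe θ c → RelLe a c →
      ∀ u v, ficJoin a (RelMeet b c) u v ↔ RelMeet (ficJoin a b) c u v

/-! ## Satisfaction and factor monoids -/

/-- The monoid `M` satisfies the identity `u ≈ v`. -/
def MSat (M : Type) [Monoid M] (u v : Word) : Prop := ∀ f : Word →* M, f u = f v

/-- The underlying type of the factor monoid `M(w)`: all factors (contiguous subwords)
of `w` together with an extra zero element (`none`). -/
abbrev Factor (w : List ℕ) : Type := Option { u : List ℕ // u <:+: w }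

namespace Factor

variable {w : List ℕ}

instance : One (Factor w) := ⟨some ⟨[], List.nil_infix⟩⟩

instance : Mul (Factor w) :=
  ⟨fun a b =>
    match a, b with
    | none, _ => none
    | some _, none => none
    | some u, some v => if h : (u.1 ++ v.1) <:+: w then some ⟨u.1 ++ v.1, h⟩ else none⟩

theorem none_mul (a : Factor w) : (none : Factor w) * a = none := rfl

theorem mul_none (a : Factor w) : a * (none : Factor w) = none := by cases a <;> rfl

theorem some_mul_some (u v : { u : List ℕ // u <:+: w }) :
    (some u : Factor w) * some v =
      if h : (u.1 ++ v.1) <:+: w then some ⟨u.1 ++ v.1, h⟩ else none := rfl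

theorem one_def : (1 : Factor w) = some ⟨[], List.nil_infix⟩ := rfl

private theorem infix_left {u v : List ℕ} (h : (u ++ v) <:+: w) : u <:+: w :=
  (List.prefix_append u v).isInfix.trans h

private theorem infix_right {u v : List ℕ} (h : (u ++ v) <:+: w) : v <:+: w :=
  (List.suffix_append u v).isInfix.trans h

instance : Monoid (Factor w) where
  mul_assoc a b c := by
    rcases a with _ | u
    · simp [none_mul]
    rcases b with _ | v
    · rw [mul_none, none_mul, mul_none]
    rcases c with _ | t
    · rw [mul_none, mul_none, mul_none]
    by_cases h : (u.1 ++ (v.1 ++ t.1)) <:+: w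
    · have h' : ((u.1 ++ v.1) ++ t.1) <:+: w := by rwa [List.append_assoc]
      have huv : (u.1 ++ v.1) <:+: w := by
        refine infix_left (v := t.1) ?_; rwa [List.append_assoc]
      have hvt : (v.1 ++ t.1) <:+: w := infix_right h
      rw [some_mul_some u v, dif_pos huv, some_mul_some v t, dif_pos hvt,
        some_mul_some, dif_pos h', some_mul_some, dif_pos h]
      exact congrArg some (Subtype.ext (List.append_assoc _ _ _))
    · have h' : ¬ ((u.1 ++ v.1) ++ t.1) <:+: w := by rwa [List.append_assoc]
      rw [some_mul_some u v, some_mul_some v t]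
      by_cases huv : (u.1 ++ v.1) <:+: w
      · rw [dif_pos huv]
        by_cases hvt : (v.1 ++ t.1) <:+: w
        · rw [dif_pos hvt, some_mul_some, dif_neg h', some_mul_some, dif_neg h]
        · rw [dif_neg hvt, some_mul_some, dif_neg h', mul_none]
      · rw [dif_neg huv, none_mul]
        by_cases hvt : (v.1 ++ t.1) <:+: w
        · rw [dif_pos hvt, some_mul_some, dif_neg h]
        · rw [dif_neg hvt, mul_none]
  one_mul a := by
    rcases a with _ | u
    · rw [mul_none]
    · rw [one_def, some_mul_some, dif_pos (by simpa using u.2)]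
      exact congrArg some (Subtype.ext (List.nil_append _))
  mul_one a := by
    rcases a with _ | u
    · rw [none_mul]
    · rw [one_def, some_mul_some, dif_pos (by simpa using u.2)]
      exact congrArg some (Subtype.ext (List.append_nil _))

end Factor

/-- `Th(M(w))`: the set of identities holding in the factor monoid `M(w)`. -/
def ThFM (w : List ℕ) : Word → Word → Prop :=
  fun u v => ∀ f : Word →* Factor w, f u = f v

/-! ## Distinguished identities and sets of identities -/

/-- The identity `α : xzytxy ≈ xzytyx` (as a pair of words). -/
def idAlphaL : Word := wx * wz * wy * wt * wx * wy
def idAlphaR : Word := wx * wz * wy * wt * wy * wx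

/-- The identity `β : xzxyty ≈ xzyxty`. -/
def idBetaL : Word := wx * wz * wx * wy * wt * wy
def idBetaR : Word := wx * wz * wy * wx * wt * wy

/-- The set of identities defining the variety `N`:
`{x² ≈ x³, x²y ≈ yx², xyxzx ≈ x²yz, α, β}`. -/
def SigmaN : Word → Word → Prop := fun u v =>
  (u = wx ^ 2 ∧ v = wx ^ 3) ∨
  (u = wx ^ 2 * wy ∧ v = wy * wx ^ 2) ∨
  (u = wx * wy * wx * wz * wx ∧ v = wx ^ 2 * wy * wz) ∨
  (u = idAlphaL ∧ v = idAlphaR) ∨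
  (u = idBetaL ∧ v = idBetaR)

/-- `θ_N = ⟨Σ_N⟩`: the fully invariant congruence of the variety `N`. -/
def thetaN : Word → Word → Prop := ficGen SigmaN

/-- The set `Σ_P(n)` of identities defining the variety `P_n`. -/
def SigmaP (n : ℕ) : Word → Word → Prop := fun u v =>
  (u = wx ^ n ∧ v = wx ^ (n + 1)) ∨
  (u = wx ^ 2 * wy ∧ v = wy * wx ^ 2) ∨
  (∃ (k l : ℕ) (ρ : ℕ → ℕ), IsPermOn ρ (k + l) ∧ u = wordA k l ρ ∧ v = wordA' k l ρ) ∨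
  (∃ (k l m : ℕ) (τ : ℕ → ℕ), IsPermOn τ (k + l + m) ∧ u = wordC k l m τ ∧ v = wordC' k l m τ) ∨
  (∃ (k l m : ℕ) (τ : ℕ → ℕ), IsPermOn τ (k + l + m) ∧ u = wordD k l m τ ∧ v = wordD' k l m τ)

/-- The set `Σ_Q(n) = {x^n ≈ x^{n+1}, x^n y ≈ y x^n, x²y ≈ xyx}`. -/
def SigmaQ (n : ℕ) : Word → Word → Prop := fun u v =>
  (u = wx ^ n ∧ v = wx ^ (n + 1)) ∨
  (u = wx ^ n * wy ∧ v = wy * wx ^ n) ∨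
  (u = wx ^ 2 * wy ∧ v = wx * wy * wx)

/-- The set `Σ_R(n) = {x^n ≈ x^{n+1}, x²y ≈ yx², α, β}`. -/
def SigmaR (n : ℕ) : Word → Word → Prop := fun u v =>
  (u = wx ^ n ∧ v = wx ^ (n + 1)) ∨
  (u = wx ^ 2 * wy ∧ v = wy * wx ^ 2) ∨
  (u = idAlphaL ∧ v = idAlphaR) ∨
  (u = idBetaL ∧ v = idBetaR)

/-- `Σ^δ`: the set of reversed identities (both sides read from right to left). -/
def SigmaDual (S : Word → Word → Prop) : Word → Word → Prop :=
  fun u v => ∃ a b, S a b ∧ u = revW a ∧ v = revW b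

/-- Left-hand side of the identity `δ_{n,m}`: `x^m t₁ x t₂ x ⋯ t_n x`. -/
def deltaL (n m : ℕ) : Word := wx ^ m * ((List.range n).map (fun i => wti (i + 1) * wx)).prod

/-- Right-hand side of the identity `δ_{n,m}`: `x^{m+n} t₁ t₂ ⋯ t_n`. -/
def deltaR (n m : ℕ) : Word := wx ^ (m + n) * ((List.range n).map (fun i => wti (i + 1))).prod

/-- The word `x^{e₀} ∏_{i=1}^r (t_i x^{e_i})`. -/
def wordE (r : ℕ) (e : ℕ → ℕ) : Word :=
  wx ^ (e 0) * ((List.range r).map (fun i => wti (i + 1) * wx ^ (e (i + 1)))).prod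

/-- The word `x^{e₀} y^{f₀} ∏_{i=1}^r (t_i x^{e_i} y^{f_i})`. -/
def wordEF (r : ℕ) (e f : ℕ → ℕ) : Word :=
  wx ^ (e 0) * wy ^ (f 0) *
    ((List.range r).map (fun i => wti (i + 1) * wx ^ (e (i + 1)) * wy ^ (f (i + 1)))).prod

/-- The word `y^{f₀} x^{e₀} ∏_{i=1}^r (t_i x^{e_i} y^{f_i})`. -/
def wordEF' (r : ℕ) (e f : ℕ → ℕ) : Word :=
  wy ^ (f 0) * wx ^ (e 0) *
    ((List.range r).map (fun i => wti (i + 1) * wx ^ (e (i + 1)) * wy ^ (f (i + 1)))).prod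

/-! ## Aperiodicity and central idempotents -/

/-- The subset `S` of `M` is a subsemigroup which is a group under the induced
multiplication. -/
def IsGroupSubsemigroup {M : Type} [Monoid M] (S : Set M) : Prop :=
  (∀ a ∈ S, ∀ b ∈ S, a * b ∈ S) ∧
    ∃ e ∈ S, (∀ a ∈ S, e * a = a ∧ a * e = a) ∧ ∀ a ∈ S, ∃ b ∈ S, a * b = e ∧ b * a = e

/-- `M` is aperiodic: every subsemigroup of `M` which is a group under the induced
multiplication is a singleton. -/
def Aperiodic (M : Type) [Monoid M] : Prop :=
  ∀ S : Set M, IsGroupSubsemigroup S → ∃ a, S = {a}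

/-- `M` has central idempotents. -/
def CentralIdempotents (M : Type) [Monoid M] : Prop :=
  ∀ e : M, e * e = e → ∀ a : M, e * a = a * e



/-! ## Auxiliary machinery for Statement 10 -/

namespace St10

variable {θ θ₁ θ₂ : Word → Word → Prop}

lemma pow_ge (h : IsFIC θ) {n : ℕ} (hp : θ (wx ^ n) (wx ^ (n + 1))) :
    ∀ k, θ (wx ^ n) (wx ^ (n + k)) := by
  intro k
  induction k with
  | zero => exact h.refl _
  | succ k ih =>
    refine h.trans ih ?_
    have h2 := h.mul (h.refl (wx ^ k)) hp
    rw [← pow_add, ← pow_add] at h2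
    have e1 : k + n = n + k := Nat.add_comm _ _
    have e2 : k + (n + 1) = n + (k + 1) := by omega
    rw [e1, e2] at h2
    exact h2

lemma pow_eq (h : IsFIC θ) {n : ℕ} (hp : θ (wx ^ n) (wx ^ (n + 1)))
    {a b : ℕ} (ha : n ≤ a) (hb : n ≤ b) : θ (wx ^ a) (wx ^ b) := by
  obtain ⟨k, rfl⟩ := Nat.exists_eq_add_of_le ha
  obtain ⟨l, rfl⟩ := Nat.exists_eq_add_of_le hb
  exact h.trans (h.symm (pow_ge h hp k)) (pow_ge h hp l)

lemma x_eq_xn (h : IsFIC θ) {n : ℕ} (hp : θ (wx ^ n) (wx ^ (n + 1)))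
    {a : ℕ} (ha : 2 ≤ a) (hx : θ wx (wx ^ a)) : θ wx (wx ^ n) := by
  have key : ∀ j : ℕ, θ wx (wx ^ (1 + j * (a - 1))) := by
    intro j
    induction j with
    | zero => simpa using h.refl wx
    | succ j ih =>
      have h2 := h.mul (h.refl (wx ^ (j * (a - 1)))) hx
      rw [← pow_succ, ← pow_add] at h2
      have e1 : j * (a - 1) + 1 = 1 + j * (a - 1) := by omega
      have e2 : j * (a - 1) + a = 1 + (j + 1) * (a - 1) := by
        have hm : (j + 1) * (a - 1) = j * (a - 1) + 1 * (a - 1) := Nat.add_mul j 1 (a - 1)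
        omega
      rw [e1, e2] at h2
      exact h.trans ih h2
  have hM := key n
  have hge : n ≤ 1 + n * (a - 1) := by
    have h1 : n * 1 ≤ n * (a - 1) := Nat.mul_le_mul_left n (by omega)
    omega
  exact h.trans hM (pow_eq h hp hge le_rfl)

lemma comm_core (h : IsFIC θ) {n : ℕ} (hc : θ (wx ^ n * wy) (wy * wx ^ n))
    (hx : θ wx (wx ^ n)) : θ (wx * wy) (wy * wx) :=
  h.trans (h.mul hx (h.refl wy)) (h.trans hc (h.mul (h.refl wy) (h.symm hx)))

lemma comm_of_x_one (h : IsFIC θ) (hx1 : θ wx 1) : θ (wx * wy) (wy * wx) := by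
  have hy1 : θ wy 1 := by
    have h2 := h.subst (FreeMonoid.lift fun _ => wy) hx1
    simpa [wx, wy, ltr, FreeMonoid.lift_eval_of, map_one] using h2
  exact h.trans (h.mul hx1 hy1) (h.symm (h.mul hy1 hx1))

lemma comm_of_pow (h : IsFIC θ) {n : ℕ} (hp : θ (wx ^ n) (wx ^ (n + 1)))
    (hc : θ (wx ^ n * wy) (wy * wx ^ n)) {a : ℕ} (ha : a ≠ 1)
    (hx : θ wx (wx ^ a)) : θ (wx * wy) (wy * wx) := by
  rcases Nat.lt_or_ge a 2 with h2 | h2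
  · have ha0 : a = 0 := by omega
    subst ha0
    exact comm_of_x_one h (by simpa using hx)
  · exact comm_core h hc (x_eq_xn h hp h2 hx)

lemma comm_of_one_pow (h : IsFIC θ) {n : ℕ} (hp : θ (wx ^ n) (wx ^ (n + 1)))
    (hc : θ (wx ^ n * wy) (wy * wx ^ n)) {k : ℕ} (hk : 1 ≤ k)
    (h1 : θ 1 (wx ^ k)) : θ (wx * wy) (wy * wx) := by
  have h2 := h.mul (h.refl wx) h1
  rw [mul_one, ← pow_succ'] at h2
  exact comm_of_pow h hp hc (by omega) h2

/-- The substitution sending letter `c` to `x` and every other letter to `1`. -/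
def sub (c : ℕ) : Word →* Word := FreeMonoid.lift fun j => if j = c then wx else 1

lemma sub_ofList (c : ℕ) (l : List ℕ) :
    sub c (FreeMonoid.ofList l) = wx ^ l.count c := by
  induction l with
  | nil => simp [sub]
  | cons a l ih =>
    have e : FreeMonoid.ofList (a :: l) = FreeMonoid.of a * FreeMonoid.ofList l := rfl
    rw [e, map_mul, ih]
    by_cases hac : a = c
    · subst hac
      have ec : List.count a (a :: l) = List.count a l + 1 := by simp [List.count_cons]
      rw [ec, pow_succ']
      simp [sub, FreeMonoid.lift_eval_of]
    · simp [sub, FreeMonoid.lift_eval_of, hac, List.count_cons, Ne.symm hac]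

lemma sub_apply (c : ℕ) (w : Word) :
    sub c w = wx ^ ((FreeMonoid.toList w).count c) := by
  conv_lhs => rw [← FreeMonoid.ofList_toList w]
  exact sub_ofList c _

lemma list_two (L : List ℕ) (h0 : L.count 0 = 1) (h1 : L.count 1 = 1)
    (hr : ∀ c, 2 ≤ c → L.count c = 0) : L = [0, 1] ∨ L = [1, 0] := by
  have hmem : ∀ x ∈ L, x = 0 ∨ x = 1 := by
    intro x hx
    by_contra hcon
    push_neg at hcon
    have hz : L.count x = 0 := hr x (by omega)
    have hpos : 0 < L.count x := List.count_pos_iff.mpr hx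
    omega
  rcases L with _ | ⟨a, _ | ⟨b, _ | ⟨c, t⟩⟩⟩
  · simp at h0
  · rcases hmem a (by simp) with rfl | rfl
    · simp at h1
    · simp at h0
  · rcases hmem a (by simp) with rfl | rfl <;> rcases hmem b (by simp) with rfl | rfl
    · simp at h1
    · exact Or.inl rfl
    · exact Or.inr rfl
    · simp at h0
  · exfalso
    rcases hmem a (by simp) with rfl | rfl <;> rcases hmem b (by simp) with rfl | rfl <;>
      rcases hmem c (by simp) with rfl | rfl <;>
      simp [List.count_cons] at h0 h1

lemma mainStep (h : IsFIC θ) {n : ℕ} (hp : θ (wx ^ n) (wx ^ (n + 1)))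
    (hc : θ (wx ^ n * wy) (wy * wx ^ n)) {v : Word} (hv : θ (wx * wy) v) :
    θ (wx * wy) (wy * wx) ∨ v = wx * wy ∨ v = wy * wx := by
  have hcount : ∀ c : ℕ,
      θ (wx ^ (([0, 1] : List ℕ).count c)) (wx ^ ((FreeMonoid.toList v).count c)) := by
    intro c
    have h2 := h.subst (sub c) hv
    rw [sub_apply, sub_apply] at h2
    have e : FreeMonoid.toList (wx * wy) = [0, 1] := rfl
    rwa [e] at h2
  by_cases h0 : (FreeMonoid.toList v).count 0 = 1
  · by_cases h1 : (FreeMonoid.toList v).count 1 = 1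
    · by_cases hr : ∀ c, 2 ≤ c → (FreeMonoid.toList v).count c = 0
      · right
        rcases list_two _ h0 h1 hr with hL | hL
        · left
          calc v = FreeMonoid.ofList (FreeMonoid.toList v) :=
                (FreeMonoid.ofList_toList v).symm
            _ = FreeMonoid.ofList [0, 1] := by rw [hL]
            _ = wx * wy := rfl
        · right
          calc v = FreeMonoid.ofList (FreeMonoid.toList v) :=
                (FreeMonoid.ofList_toList v).symm
            _ = FreeMonoid.ofList [1, 0] := by rw [hL]
            _ = wy * wx := rfl
      · push_neg at hr
        obtain ⟨c, hc2, hcne⟩ := hr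
        left
        have hcc := hcount c
        have e0 : ([0, 1] : List ℕ).count c = 0 := by
          have hc0 : c ≠ 0 := by omega
          have hc1 : c ≠ 1 := by omega
          simp [List.count_cons, hc0, hc1, Ne.symm hc0, Ne.symm hc1]
        rw [e0, pow_zero] at hcc
        exact comm_of_one_pow h hp hc (Nat.pos_of_ne_zero hcne) hcc
    · left
      have hcc := hcount 1
      have e0 : ([0, 1] : List ℕ).count 1 = 1 := by simp
      rw [e0, pow_one] at hcc
      exact comm_of_pow h hp hc h1 hcc
  · left
    have hcc := hcount 0
    have e0 : ([0, 1] : List ℕ).count 0 = 1 := by simp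
    rw [e0, pow_one] at hcc
    exact comm_of_pow h hp hc h0 hcc

/-- The union of two congruences; its transitive closure is their join. -/
def RJ (θ₁ θ₂ : Word → Word → Prop) : Word → Word → Prop := fun u v => θ₁ u v ∨ θ₂ u v

lemma RJ_mul_right (h₁ : IsFIC θ₁) (h₂ : IsFIC θ₂) {u v : Word} (w : Word)
    (hs : RJ θ₁ θ₂ u v) : RJ θ₁ θ₂ (u * w) (v * w) :=
  hs.elim (fun h => Or.inl (h₁.mul h (h₁.refl w))) (fun h => Or.inr (h₂.mul h (h₂.refl w)))

lemma RJ_mul_left (h₁ : IsFIC θ₁) (h₂ : IsFIC θ₂) {u v : Word} (w : Word)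
    (hs : RJ θ₁ θ₂ u v) : RJ θ₁ θ₂ (w * u) (w * v) :=
  hs.elim (fun h => Or.inl (h₁.mul (h₁.refl w) h)) (fun h => Or.inr (h₂.mul (h₂.refl w) h))

lemma RJ_symm (h₁ : IsFIC θ₁) (h₂ : IsFIC θ₂) {u v : Word}
    (hs : RJ θ₁ θ₂ u v) : RJ θ₁ θ₂ v u :=
  hs.elim (fun h => Or.inl (h₁.symm h)) (fun h => Or.inr (h₂.symm h))

lemma RJ_subst (h₁ : IsFIC θ₁) (h₂ : IsFIC θ₂) (σ : Word →* Word) {u v : Word}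
    (hs : RJ θ₁ θ₂ u v) : RJ θ₁ θ₂ (σ u) (σ v) :=
  hs.elim (fun h => Or.inl (h₁.subst σ h)) (fun h => Or.inr (h₂.subst σ h))

lemma transGen_mul_right (h₁ : IsFIC θ₁) (h₂ : IsFIC θ₂) {u v : Word} (w : Word)
    (huv : Relation.TransGen (RJ θ₁ θ₂) u v) :
    Relation.TransGen (RJ θ₁ θ₂) (u * w) (v * w) := by
  induction huv with
  | single hs => exact .single (RJ_mul_right h₁ h₂ w hs)
  | tail _ hs ih => exact ih.tail (RJ_mul_right h₁ h₂ w hs)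

lemma transGen_mul_left (h₁ : IsFIC θ₁) (h₂ : IsFIC θ₂) {u v : Word} (w : Word)
    (huv : Relation.TransGen (RJ θ₁ θ₂) u v) :
    Relation.TransGen (RJ θ₁ θ₂) (w * u) (w * v) := by
  induction huv with
  | single hs => exact .single (RJ_mul_left h₁ h₂ w hs)
  | tail _ hs ih => exact ih.tail (RJ_mul_left h₁ h₂ w hs)

lemma isFIC_transGen (h₁ : IsFIC θ₁) (h₂ : IsFIC θ₂) :
    IsFIC (Relation.TransGen (RJ θ₁ θ₂)) where
  refl u := .single (Or.inl (h₁.refl u))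
  symm {u v} h := by
    induction h with
    | single hs => exact .single (RJ_symm h₁ h₂ hs)
    | tail _ hs ih => exact .head (RJ_symm h₁ h₂ hs) ih
  trans h h' := h.trans h'
  mul {u₁ v₁ u₂ v₂} ha hb :=
    (transGen_mul_right h₁ h₂ u₂ ha).trans (transGen_mul_left h₁ h₂ v₁ hb)
  subst σ {u v} h := by
    induction h with
    | single hs => exact .single (RJ_subst h₁ h₂ σ hs)
    | tail _ hs ih => exact ih.tail (RJ_subst h₁ h₂ σ hs)

end St10

/-- If `θ₁`, `θ₂` are fully invariant congruences of varieties of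
aperiodic monoids with central idempotents and `(xy, yx)` lies in their join, then it
lies in `θ₁` or in `θ₂`. -/
theorem statement_10 (θ₁ θ₂ : Word → Word → Prop) (h₁ : IsFIC θ₁) (h₂ : IsFIC θ₂)
    (hap₁ : ∃ n : ℕ, 1 ≤ n ∧ θ₁ (wx ^ n) (wx ^ (n + 1)) ∧ θ₁ (wx ^ n * wy) (wy * wx ^ n))
    (hap₂ : ∃ n : ℕ, 1 ≤ n ∧ θ₂ (wx ^ n) (wx ^ (n + 1)) ∧ θ₂ (wx ^ n * wy) (wy * wx ^ n))
    (h : ficJoin θ₁ θ₂ (wx * wy) (wy * wx)) :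
    θ₁ (wx * wy) (wy * wx) ∨ θ₂ (wx * wy) (wy * wx) := by
  obtain ⟨n₁, hn₁, hp₁, hc₁⟩ := hap₁
  obtain ⟨n₂, hn₂, hp₂, hc₂⟩ := hap₂
  have hj : Relation.TransGen (St10.RJ θ₁ θ₂) (wx * wy) (wy * wx) :=
    h _ (St10.isFIC_transGen h₁ h₂) (fun u v huv => .single huv)
  have stepfn : ∀ {b : Word}, St10.RJ θ₁ θ₂ (wx * wy) b →
      (θ₁ (wx * wy) (wy * wx) ∨ θ₂ (wx * wy) (wy * wx)) ∨ b = wx * wy := by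
    intro b hs
    rcases hs with hs | hs
    · rcases St10.mainStep h₁ hp₁ hc₁ hs with hg | he | he
      · exact Or.inl (Or.inl hg)
      · exact Or.inr he
      · exact Or.inl (Or.inl (he ▸ hs))
    · rcases St10.mainStep h₂ hp₂ hc₂ hs with hg | he | he
      · exact Or.inl (Or.inr hg)
      · exact Or.inr he
      · exact Or.inl (Or.inr (he ▸ hs))
  have key : ∀ v : Word, Relation.TransGen (St10.RJ θ₁ θ₂) (wx * wy) v →
      (θ₁ (wx * wy) (wy * wx) ∨ θ₂ (wx * wy) (wy * wx)) ∨ v = wx * wy := by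
    intro v hv
    induction hv with
    | single hs => exact stepfn hs
    | tail _ hs ih =>
      rcases ih with hg | he
      · exact Or.inl hg
      · rw [he] at hs
        exact stepfn hs
  rcases key _ hj with hg | he
  · exact hg
  · exfalso
    have h' : ([1, 0] : List ℕ) = [0, 1] := congrArg FreeMonoid.toList he
    simp at h'
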